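/- (Type-I error control of the one-sided plausibility test.) Fix θ₀ > 0 and let A = (θ₀, ∞). For any θ > θ₀ (i.e., θ ∈ A), if X is Poisson(θ)-distributed, then for every α ∈ (0,1), P{ F_{θ₀}(X) ≤ α } ≤ α, where F_{θ₀}(x) = ∑_{k=0}^{x} e^{-θ₀} θ₀^k / k!. Hence the rule that rejects H₀: θ ∈ A when the plausibility pl_x(A) = F_{θ₀}(x) is at most α has frequentist Type-I error at most α. -/

import Mathlib

/-- The Poisson(θ) probability mass function. -/
noncomputable def poisPMF (θ : ℝ) (x : ℕ) : ℝ := Real.exp (-θ) * θ ^ x / Nat.factorial x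

/-- The Poisson(θ) distribution function F_θ(x) = ∑_{k=0}^{x} e^{-θ} θ^k / k!. -/
noncomputable def poisCDF (θ : ℝ) (x : ℕ) : ℝ := ∑ k ∈ Finset.range (x + 1), poisPMF θ k

lemma poisPMF_nonneg {θ : ℝ} (hθ : 0 ≤ θ) (x : ℕ) : 0 ≤ poisPMF θ x := by
  unfold poisPMF
  positivity

lemma hasSum_poisPMF {θ : ℝ} : HasSum (poisPMF θ) 1 := by
  have h := NormedSpace.expSeries_div_hasSum_exp (𝔸 := ℝ) θ
  have h2 := h.mul_left (Real.exp (-θ))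
  have : Real.exp (-θ) * NormedSpace.exp θ = 1 := by
    rw [← Real.exp_eq_exp_ℝ, ← Real.exp_add]
    simp
  rw [this] at h2
  suffices e : poisPMF θ = fun n => Real.exp (-θ) * (θ ^ n / (n.factorial : ℝ)) from e ▸ h2
  funext n
  unfold poisPMF
  ring

lemma hasDerivAt_poisCDF (n : ℕ) (t : ℝ) :
    HasDerivAt (fun s => poisCDF s n) (-(Real.exp (-t) * t ^ n / Nat.factorial n)) t := by
  induction n with
  | zero =>
    have : (fun s => poisCDF s 0) = fun s => Real.exp (-s) := by
      funext s; simp [poisCDF, poisPMF]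
    rw [this]
    simpa [Function.comp_def] using ((Real.hasDerivAt_exp (-t)).comp t (hasDerivAt_neg t))
  | succ n ih =>
    have hterm : HasDerivAt (fun s => Real.exp (-s) * s ^ (n+1) / Nat.factorial (n+1))
        (Real.exp (-t) * t ^ n / Nat.factorial n
          - Real.exp (-t) * t ^ (n+1) / Nat.factorial (n+1)) t := by
      have he : HasDerivAt (fun s : ℝ => Real.exp (-s)) (-Real.exp (-t)) t := by
        simpa [Function.comp_def] using ((Real.hasDerivAt_exp (-t)).comp t (hasDerivAt_neg t))
      have hp : HasDerivAt (fun s : ℝ => s ^ (n+1)) ((n+1 : ℕ) * t ^ n) t := by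
        simpa using hasDerivAt_pow (n+1) t
      have := (he.mul hp).div_const (Nat.factorial (n+1) : ℝ)
      refine this.congr_deriv (Eq.symm ?_)
      rw [Nat.factorial_succ]
      push_cast
      have hfn : (Nat.factorial n : ℝ) ≠ 0 := Nat.cast_ne_zero.mpr (Nat.factorial_ne_zero n)
      field_simp
      ring
    have : (fun s => poisCDF s (n+1))
        = fun s => poisCDF s n + Real.exp (-s) * s ^ (n+1) / Nat.factorial (n+1) := by
      funext s
      simp [poisCDF, Finset.sum_range_succ, poisPMF]
    rw [this]
    refine (ih.add hterm).congr_deriv (Eq.symm ?_)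
    ring

lemma poisCDF_anti {θ₀ θ : ℝ} (h0 : 0 < θ₀) (h : θ₀ ≤ θ) (n : ℕ) :
    poisCDF θ n ≤ poisCDF θ₀ n := by
  have hcont : ∀ s ∈ Set.Icc θ₀ θ, HasDerivAt (fun s => poisCDF s n)
      (-(Real.exp (-s) * s ^ n / Nat.factorial n)) s := fun s _ => hasDerivAt_poisCDF n s
  have := sub_nonneg.mpr h
  have key : poisCDF θ n - poisCDF θ₀ n ≤ 0 := by
    have hanti : AntitoneOn (fun s => poisCDF s n) (Set.Icc θ₀ θ) := by
      apply antitoneOn_of_deriv_nonpos (convex_Icc _ _)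
      · exact Continuous.continuousOn (by
          have : Continuous fun s : ℝ => poisCDF s n := by
            unfold poisCDF poisPMF
            continuity
          exact this)
      · intro s hs
        exact ((hasDerivAt_poisCDF n s).differentiableAt).differentiableWithinAt
      · intro s hs
        rw [(hasDerivAt_poisCDF n s).deriv]
        rw [interior_Icc] at hs
        have hs0 : 0 < s := lt_of_lt_of_le h0 (le_of_lt hs.1)
        have : 0 ≤ Real.exp (-s) * s ^ n / Nat.factorial n := by positivity
        linarith
    linarith [hanti (Set.left_mem_Icc.mpr h) (Set.right_mem_Icc.mpr h) h]
  linarith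


/-- Type-I error control of the one-sided plausibility test: Fix θ₀ > 0
and let A = (θ₀, ∞). For any θ > θ₀ (i.e., θ ∈ A), if X is Poisson(θ)-distributed, then
for every α ∈ (0,1), P{ F_{θ₀}(X) ≤ α } ≤ α. Hence the rule that rejects H₀: θ ∈ A when
the plausibility pl_x(A) = F_{θ₀}(x) is at most α has frequentist Type-I error at most α. -/
theorem one_sided_plausibility_test_type_I_error (θ₀ : ℝ) (hθ₀ : 0 < θ₀)
    (θ : ℝ) (hθ : θ₀ < θ) (α : ℝ) (hα : α ∈ Set.Ioo (0:ℝ) 1) :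
    ∑' x : {x : ℕ // poisCDF θ₀ x ≤ α}, poisPMF θ x ≤ α := by
  obtain ⟨hα0, hα1⟩ := hα
  have hθpos : 0 < θ := hθ₀.trans hθ
  -- ∃ n, α < poisCDF θ₀ n
  have hex : ∃ n, α < poisCDF θ₀ n := by
    by_contra hcon
    push_neg at hcon
    have hten : Filter.Tendsto (fun n => ∑ k ∈ Finset.range n, poisPMF θ₀ k)
        Filter.atTop (nhds 1) := hasSum_poisPMF.tendsto_sum_nat
    have hten' : Filter.Tendsto (fun n => poisCDF θ₀ n) Filter.atTop (nhds 1) :=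
      hten.comp (Filter.tendsto_add_atTop_nat 1)
    have : (1:ℝ) ≤ α := le_of_tendsto hten' (Filter.Eventually.of_forall hcon)
    linarith
  classical
  set N := Nat.find hex with hN
  -- monotone cdf in n
  have hmono : Monotone (poisCDF θ₀) := by
    intro a b hab
    unfold poisCDF
    apply Finset.sum_le_sum_of_subset_of_nonneg
    · exact Finset.range_subset_range.mpr (by omega)
    · intro i _ _; exact poisPMF_nonneg hθ₀.le i
  have hset : {x : ℕ | poisCDF θ₀ x ≤ α} = ↑(Finset.range N) := by
    ext x
    simp only [Set.mem_setOf_eq, Finset.coe_range, Set.mem_Iio]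
    constructor
    · intro hx
      by_contra hge
      push_neg at hge
      exact absurd (le_trans (hmono hge) hx) (not_le.mpr (Nat.find_spec hex))
    · intro hx
      have := Nat.find_min hex hx
      linarith [not_lt.mp this]
  have heq : ∑' x : {x : ℕ // poisCDF θ₀ x ≤ α}, poisPMF θ x
      = ∑ x ∈ Finset.range N, poisPMF θ x := by
    show ∑' (x : ↑{x : ℕ | poisCDF θ₀ x ≤ α}), poisPMF θ ↑x = _
    rw [hset]
    exact Finset.tsum_subtype' (Finset.range N) (poisPMF θ)
  rw [heq]
  rcases Nat.eq_zero_or_pos N with h0 | hpos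
  · rw [h0]; simpa using hα0.le
  · have hNle : poisCDF θ₀ (N - 1) ≤ α := by
      have := Nat.find_min hex (show N - 1 < N by omega)
      linarith [not_lt.mp this]
    have : ∑ x ∈ Finset.range N, poisPMF θ x = poisCDF θ (N - 1) := by
      unfold poisCDF
      have h1 : N - 1 + 1 = N := by omega
      rw [h1]
    rw [this]
    exact le_trans (poisCDF_anti hθ₀ hθ.le (N-1)) hNle
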